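/- Let N ≥ 1 and I = {0,1,…,N}, let P be an irreducible stochastic matrix on I that is monotone (for every y and x < N, Σ_{z≤y} P(x+1,z) ≤ Σ_{z≤y} P(x,z)), with stationary distribution π, and let P̂ be the Siegmund dual: P̂(y,x) = Σ_{z≤y} P(x,z) − Σ_{z≤y} P(x+1,z) for x < N, P̂(y,N) = Σ_{z≤y} P(N,z). Write π^c(x) := Σ_{y≤x} π(y) for the cumulative distribution of π. Then: (a) H_Sᵀ·π = π^c, where H_S(x,y) = 1 if x ≤ y and 0 otherwise; (b) the matrix Λ defined by Λ(x,y) = π(y)/π^c(x) if y ≤ x and 0 otherwise is stochastic; (c) the matrix P̃ defined by P̃(x,y) = P̂(x,y)·π^c(y)/π^c(x) is stochastic and satisfies P̃·Λ = Λ·←P, where ←P(x,y) = π(y)·P(y,x)/π(x); (d) Λ(x,N) = π(N) if x = N and Λ(x,N) = 0 if x < N, i.e. Λ·e_N = π(N)·e_N. -/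

import Mathlib

open Matrix Finset

/-- The reversed kernel `←P(x,y) = π(y)·P(y,x)/π(x)`. -/
noncomputable def revKernel {I : Type*} (P : Matrix I I ℝ) (π : I → ℝ) : Matrix I I ℝ :=
  Matrix.of fun x y => π y * P y x / π x

/-- The Siegmund dual of `P`. -/
noncomputable def siegmundDual (N : ℕ) (P : Matrix (Fin (N+1)) (Fin (N+1)) ℝ) :
    Matrix (Fin (N+1)) (Fin (N+1)) ℝ :=
  Matrix.of fun y x =>
    if (x : ℕ) < N then
      (∑ z ∈ Finset.Iic y, P x z) - ∑ z ∈ Finset.Iic y, P (x + 1) z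
    else ∑ z ∈ Finset.Iic y, P x z

/-- Corollary coro21 (ii)–(iv): for a monotone irreducible stochastic kernel `P`
with stationary distribution `π`: (a) `H_Sᵀ·π = π^c`; (b) `Λ(x,y) = 1{y≤x}·π(y)/π^c(x)`
is stochastic; (c) `P̃(x,y) = P̂(x,y)·π^c(y)/π^c(x)` is stochastic and `P̃·Λ = Λ·←P`;
(d) `Λ·e_N = π(N)·e_N`. -/
lemma tele {N : ℕ} (g : Fin (N+1) → ℝ) (b : Fin (N+1)) :
    ∑ c ∈ Finset.Ici b, (if (c:ℕ) < N then g c - g (c+1) else g c) = g b := by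
  induction b using Fin.reverseInduction with
  | last =>
    have h : Finset.Ici (Fin.last N) = {Fin.last N} := by
      ext c; simp [Fin.last_le_iff, eq_comm]
    simp [h]
  | cast i ih =>
    have h : Finset.Ici i.castSucc = insert i.castSucc (Finset.Ici i.succ) := by
      ext c
      simp only [Finset.mem_Ici, Finset.mem_insert]
      constructor
      · intro hc
        rcases eq_or_lt_of_le hc with h' | h'
        · exact Or.inl h'.symm
        · exact Or.inr (Fin.castSucc_lt_iff_succ_le.mp h')
      · rintro (rfl | hc)
        · exact le_refl _
        · exact le_trans (Fin.castSucc_le_succ i) hc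
    have hnot : i.castSucc ∉ Finset.Ici i.succ := by
      simp [Fin.succ_le_castSucc_iff]
    rw [h, Finset.sum_insert hnot, ih]
    have hlt : (i.castSucc : ℕ) < N := i.isLt
    rw [if_pos hlt, Fin.coeSucc_eq_succ]
    ring

lemma swapIic {N : ℕ} (f : Fin (N+1) → Fin (N+1) → ℝ) :
    ∑ y, ∑ z ∈ Finset.Iic y, f y z = ∑ z, ∑ y ∈ Finset.Ici z, f y z := by
  have h1 : ∀ y : Fin (N+1), ∑ z ∈ Finset.Iic y, f y z
      = ∑ z, if z ≤ y then f y z else 0 := by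
    intro y
    rw [← Finset.sum_filter]
    congr 1; ext z; simp
  have h2 : ∀ z : Fin (N+1), ∑ y ∈ Finset.Ici z, f y z
      = ∑ y, if z ≤ y then f y z else 0 := by
    intro z
    rw [← Finset.sum_filter]
    congr 1; ext y; simp
  simp_rw [h1, h2]
  exact Finset.sum_comm

theorem stmt10 (N : ℕ) (hN : 1 ≤ N) (P : Matrix (Fin (N+1)) (Fin (N+1)) ℝ)
    (π : Fin (N+1) → ℝ)
    (hP0 : ∀ x y, 0 ≤ P x y) (hP1 : ∀ x, ∑ y, P x y = 1)
    (hirr : ∀ x y, ∃ n ≥ 1, 0 < (P ^ n) x y)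
    (hπpos : ∀ x, 0 < π x) (hπ1 : ∑ x, π x = 1)
    (hπP : ∀ y, ∑ x, π x * P x y = π y)
    (hmono : ∀ y x : Fin (N+1), (x : ℕ) < N →
      ∑ z ∈ Finset.Iic y, P (x + 1) z ≤ ∑ z ∈ Finset.Iic y, P x z) :
    let HS : Matrix (Fin (N+1)) (Fin (N+1)) ℝ :=
      Matrix.of fun x y => if x ≤ y then 1 else 0
    let Phat := siegmundDual N P
    let πc : Fin (N+1) → ℝ := fun x => ∑ y ∈ Finset.Iic x, π y
    let Λ : Matrix (Fin (N+1)) (Fin (N+1)) ℝ :=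
      Matrix.of fun x y => if y ≤ x then π y / πc x else 0
    let Ptil : Matrix (Fin (N+1)) (Fin (N+1)) ℝ :=
      Matrix.of fun x y => Phat x y * πc y / πc x
    HSᵀ.mulVec π = πc ∧
    ((∀ x y, 0 ≤ Λ x y) ∧ (∀ x, ∑ y, Λ x y = 1)) ∧
    ((∀ x y, 0 ≤ Ptil x y) ∧ (∀ x, ∑ y, Ptil x y = 1) ∧
      Ptil * Λ = Λ * revKernel P π) ∧
    (∀ x, Λ x (Fin.last N) = if x = Fin.last N then π (Fin.last N) else 0) := by

  intro HS Phat πc Λ Ptil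
  -- basic facts
  have hπcpos : ∀ x, 0 < πc x := by
    intro x
    exact Finset.sum_pos (fun y _ => hπpos y) (Finset.nonempty_Iic)
  have hπcne : ∀ x, πc x ≠ 0 := fun x => (hπcpos x).ne'
  set g : Fin (N+1) → Fin (N+1) → ℝ := fun x z => ∑ w ∈ Finset.Iic x, P z w with hg
  have hPhat : ∀ x y, Phat x y = if (y:ℕ) < N then g x y - g x (y+1) else g x y := by
    intro x y
    simp only [Phat, siegmundDual, Matrix.of_apply, hg]
  have hIci : ∀ x b, ∑ c ∈ Finset.Ici b, Phat x c = g x b := by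
    intro x b
    simp_rw [hPhat]
    exact tele (g x) b
  have hπclast : πc (Fin.last N) = 1 := by
    have : Finset.Iic (Fin.last N) = Finset.univ := by
      ext c; simp [Fin.le_last]
    simp only [πc, this, hπ1]
  -- key identity for row sums of Ptil
  have hkey : ∀ x, ∑ y, Phat x y * πc y = πc x := by
    intro x
    have h1 : ∀ y : Fin (N+1), Phat x y * πc y = ∑ z ∈ Finset.Iic y, Phat x y * π z := by
      intro y; simp only [πc]; rw [Finset.mul_sum]
    calc ∑ y, Phat x y * πc y = ∑ y, ∑ z ∈ Finset.Iic y, Phat x y * π z := by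
          simp_rw [h1]
      _ = ∑ z, ∑ y ∈ Finset.Ici z, Phat x y * π z := swapIic _
      _ = ∑ z, g x z * π z := by
          refine Finset.sum_congr rfl fun z _ => ?_
          rw [← Finset.sum_mul, hIci]
      _ = ∑ z, ∑ w ∈ Finset.Iic x, π z * P z w := by
          refine Finset.sum_congr rfl fun z _ => ?_
          rw [hg]; rw [Finset.sum_mul]
          exact Finset.sum_congr rfl fun w _ => mul_comm _ _
      _ = ∑ w ∈ Finset.Iic x, ∑ z, π z * P z w := Finset.sum_comm
      _ = ∑ w ∈ Finset.Iic x, π w := Finset.sum_congr rfl fun w _ => hπP w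
      _ = πc x := rfl
  refine ⟨?_, ⟨?_, ?_⟩, ⟨?_, ?_, ?_⟩, ?_⟩
  · -- (a)
    funext x
    simp only [Matrix.mulVec, dotProduct, HS, Matrix.transpose_apply, Matrix.of_apply,
      ite_mul, one_mul, zero_mul]
    rw [← Finset.sum_filter]
    exact Finset.sum_congr (by ext y; simp) (fun _ _ => rfl)
  · -- Λ nonneg
    intro x y
    simp only [Λ, Matrix.of_apply]
    split
    · exact div_nonneg (hπpos y).le (hπcpos x).le
    · exact le_refl 0
  · -- Λ row sums
    intro x
    simp only [Λ, Matrix.of_apply]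
    rw [← Finset.sum_filter]
    have : Finset.univ.filter (fun y => y ≤ x) = Finset.Iic x := by ext y; simp
    rw [this, ← Finset.sum_div]
    exact div_self (hπcne x)
  · -- Ptil nonneg
    intro x y
    simp only [Ptil, Matrix.of_apply]
    have hp : 0 ≤ Phat x y := by
      rw [hPhat]
      split
      · exact sub_nonneg.mpr (hmono x y (by assumption))
      · exact Finset.sum_nonneg fun w _ => hP0 y w
    exact div_nonneg (mul_nonneg hp (hπcpos y).le) (hπcpos x).le
  · -- Ptil row sums
    intro x
    simp only [Ptil, Matrix.of_apply]
    rw [← Finset.sum_div, hkey]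
    exact div_self (hπcne x)
  · -- intertwining
    ext a b
    simp only [Matrix.mul_apply, Ptil, Λ, Matrix.of_apply, revKernel]
    have hL : ∀ c : Fin (N+1), Phat a c * πc c / πc a * (if b ≤ c then π b / πc c else 0)
        = if b ≤ c then Phat a c * (π b / πc a) else 0 := by
      intro c
      split
      · field_simp [hπcne c, hπcne a]
      · ring
    have hR : ∀ c : Fin (N+1), (if c ≤ a then π c / πc a else 0) * (π b * P b c / π c)
        = if c ≤ a then P b c * (π b / πc a) else 0 := by
      intro c
      split
      · field_simp [(hπpos c).ne', hπcne a]
      · ring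
    simp_rw [hL, hR]
    rw [← Finset.sum_filter, ← Finset.sum_filter]
    have e1 : Finset.univ.filter (fun c => b ≤ c) = Finset.Ici b := by ext c; simp
    have e2 : Finset.univ.filter (fun c => c ≤ a) = Finset.Iic a := by ext c; simp
    rw [e1, e2, ← Finset.sum_mul, ← Finset.sum_mul, hIci]
  · -- (d)
    intro x
    simp only [Λ, Matrix.of_apply, Fin.last_le_iff]
    by_cases hx : x = Fin.last N
    · subst hx
      simp [hπclast]
    · rw [if_neg (by simpa [eq_comm] using hx), if_neg hx]
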